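/- Let F : ℝ² → ℝ² be defined by F(x₁, x₂) = (-x₂, 2x₁), X = [0,1]², and X* = {x ∈ X : x₂ = 0}. Then the gap function G(x) = max_{y ∈ X} ⟨F(y), x - y⟩ satisfies G(x) = 2x₂ = 2·dist(x, X*) for all x ∈ X. -/

import Mathlib

open scoped RealInnerProductSpace

/-- For F(x₁,x₂) = (-x₂, 2x₁), X = [0,1]² and X* = {x ∈ X : x₂ = 0}, the gap
    function G(x) = max_{y ∈ X} ⟨F(y), x - y⟩ satisfies
    G(x) = 2x₂ = 2·dist(x, X*) for all x ∈ X. -/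
theorem gap_function_example :
    let F : EuclideanSpace ℝ (Fin 2) → EuclideanSpace ℝ (Fin 2) :=
      fun x => WithLp.toLp 2 ![-(x 1), 2 * x 0]
    let X : Set (EuclideanSpace ℝ (Fin 2)) :=
      {x | x 0 ∈ Set.Icc (0 : ℝ) 1 ∧ x 1 ∈ Set.Icc (0 : ℝ) 1}
    let Xstar : Set (EuclideanSpace ℝ (Fin 2)) := {x | x ∈ X ∧ x 1 = 0}
    ∀ x ∈ X, IsGreatest {v : ℝ | ∃ y ∈ X, v = ⟪F y, x - y⟫} (2 * x 1) ∧
      2 * x 1 = 2 * Metric.infDist x Xstar := by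
  intro F X Xstar x hx
  obtain ⟨⟨h00, h01⟩, h10, h11⟩ := hx
  have hinner : ∀ y : EuclideanSpace ℝ (Fin 2),
      ⟪F y, x - y⟫ = -(y 1) * (x 0 - y 0) + 2 * y 0 * (x 1 - y 1) := by
    intro y
    simp [F, PiLp.inner_apply, Fin.sum_univ_two, Matrix.cons_val_zero,
      Matrix.cons_val_one]
    ring
  constructor
  · constructor
    · -- attained at y = (1, 0)
      refine ⟨(WithLp.equiv 2 (Fin 2 → ℝ)).symm ![1, 0], ⟨?_, ?_⟩, ?_⟩
      · simp
      · simp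
      · rw [hinner]; simp
    · rintro v ⟨y, ⟨⟨hy00, hy01⟩, hy10, hy11⟩, rfl⟩
      rw [hinner]
      nlinarith [mul_nonneg hy10 h00, mul_nonneg hy10 hy00,
        mul_le_one₀ hy01 h10 h11]
  · -- infDist x Xstar = x 1
    have hmem : ((WithLp.equiv 2 (Fin 2 → ℝ)).symm ![x 0, 0]) ∈ Xstar := by
      refine ⟨⟨?_, ?_⟩, ?_⟩ <;> simp [h00, h01]
    have hdist : dist x ((WithLp.equiv 2 (Fin 2 → ℝ)).symm ![x 0, 0]) = x 1 := by
      rw [EuclideanSpace.dist_eq]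
      simp [Fin.sum_univ_two, Real.dist_eq, abs_of_nonneg h10,
        Real.sqrt_sq h10]
    have hle : Metric.infDist x Xstar ≤ x 1 := by
      calc Metric.infDist x Xstar ≤ _ := Metric.infDist_le_dist_of_mem hmem
        _ = x 1 := hdist
    have hge : x 1 ≤ Metric.infDist x Xstar := by
      by_contra hcon
      push_neg at hcon
      rw [Metric.infDist_lt_iff ⟨_, hmem⟩] at hcon
      obtain ⟨y, ⟨⟨hy0, hy1⟩, hy2⟩, hlt⟩ := hcon
      have : |x 1 - y 1| ≤ dist x y := by
        rw [EuclideanSpace.dist_eq]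
        have h1 : (x 1 - y 1) ^ 2 ≤ ∑ i : Fin 2, dist (x i) (y i) ^ 2 := by
          simp [Fin.sum_univ_two, Real.dist_eq, sq_abs]
          nlinarith [sq_nonneg (x 0 - y 0)]
        calc |x 1 - y 1| = Real.sqrt ((x 1 - y 1) ^ 2) := (Real.sqrt_sq_eq_abs _).symm
          _ ≤ _ := Real.sqrt_le_sqrt h1
      rw [hy2, sub_zero, abs_of_nonneg h10] at this
      linarith
    linarith [le_antisymm hle hge]
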